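/- Any functional two-way nondeterministic finite state transducer with N states is N-crossing: for every pair (u,v) in its transduction, there is an accepting run on u with output v whose crossing sequences all have length at most N. -/

import Mathlib

/-- A (nondeterministic) two-way finite state transducer over alphabet `A` with
states `Q`: `delta p a v q d` means there is a transition from `p` reading `a`,
outputting `v`, going to state `q` and moving right (`d = true`) or left
(`d = false`). -/
structure TwoNFT (A Q : Type*) where
  init : Q
  final : Q → Prop
  delta : Q → A → List A → Q → Bool → Prop

/-- The `i`-th letter of `u` (1-based). -/
def letterAt {A : Type*} [Inhabited A] (u : List A) (i : ℕ) : A := u.getD (i - 1) default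

/-- `ρ 1, …, ρ m` is a run of `T` on `u`, where `o k` is the output of the `k`-th
transition. Positions are 1-based; the run starts in `(init, 1)`. -/
def IsRun {A Q : Type*} [Inhabited A] (T : TwoNFT A Q) (u : List A) (m : ℕ)
    (ρ : ℕ → Q × ℕ) (o : ℕ → List A) : Prop :=
  1 ≤ m ∧ ρ 1 = (T.init, 1) ∧ (ρ m).2 ≤ u.length + 1 ∧
  ∀ k, 1 ≤ k → k < m →
    1 ≤ (ρ k).2 ∧ (ρ k).2 ≤ u.length ∧
    ∃ d : Bool, T.delta (ρ k).1 (letterAt u ((ρ k).2)) (o k) (ρ (k + 1)).1 d ∧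
      (if d then (ρ (k + 1)).2 = (ρ k).2 + 1 else (ρ k).2 = (ρ (k + 1)).2 + 1)

/-- An accepting run: it ends at position `n + 1` in a final state. -/
def IsAccRun {A Q : Type*} [Inhabited A] (T : TwoNFT A Q) (u : List A) (m : ℕ)
    (ρ : ℕ → Q × ℕ) (o : ℕ → List A) : Prop :=
  IsRun T u m ρ o ∧ (ρ m).2 = u.length + 1 ∧ T.final (ρ m).1

/-- The output word of a run of length `m`: concatenation of `o 1, …, o (m-1)`. -/
def outWord {A : Type*} (o : ℕ → List A) (m : ℕ) : List A :=
  (((List.range (m - 1)).map fun k => o (k + 1))).flatten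

/-- The transduction `R(T)` defined by `T`. -/
def TReal {A Q : Type*} [Inhabited A] (T : TwoNFT A Q) (u v : List A) : Prop :=
  ∃ m ρ o, IsAccRun T u m ρ o ∧ outWord o m = v

/-- `T` is functional. -/
def Functional {A Q : Type*} [Inhabited A] (T : TwoNFT A Q) : Prop :=
  ∀ u v v', TReal T u v → TReal T u v' → v = v'

/-- The crossing sequence of the run `ρ` (of length `m`) at position `i`. -/
def CS {Q : Type*} (ρ : ℕ → Q × ℕ) (m i : ℕ) : List Q :=
  ((((List.range m).map (· + 1)).filter fun k => (ρ k).2 = i)).map fun k => (ρ k).1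

/-- Any functional 2NFT with `N` states is `N`-crossing: every input–output pair is
realized by an accepting run all of whose crossing sequences have length at most `N`. -/
lemma splice_run {A Q : Type*} [Inhabited A] (T : TwoNFT A Q) (u : List A) (m : ℕ)
    (ρ : ℕ → Q × ℕ) (o : ℕ → List A) (hacc : IsAccRun T u m ρ o)
    (k₁ k₂ : ℕ) (h1 : 1 ≤ k₁) (h12 : k₁ < k₂) (h2m : k₂ ≤ m) (heq : ρ k₁ = ρ k₂) :
    ∃ ρ' o', IsAccRun T u (m - (k₂ - k₁)) ρ' o' := by
  set s := k₂ - k₁ with hs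
  obtain ⟨⟨hm1, hinit, hend, hstep⟩, hpos, hfin⟩ := hacc
  set ρ' : ℕ → Q × ℕ := fun k => if k ≤ k₁ then ρ k else ρ (k + s) with hρ'
  set o' : ℕ → List A := fun k => if k < k₁ then o k else o (k + s) with ho'
  have hρend : ρ' (m - s) = ρ m := by
    simp only [hρ']
    split
    · have hms : m - s = k₁ := by omega
      rw [hms, heq]; congr 1; omega
    · congr 1; omega
  refine ⟨ρ', o', ⟨⟨by omega, ?_, ?_, ?_⟩, ?_, ?_⟩⟩
  · simpa only [hρ', if_pos h1] using hinit
  · rw [hρend]; exact hend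
  · intro k hk1 hkm
    by_cases hk : k < k₁
    · have e1 : ρ' k = ρ k := by simp only [hρ']; rw [if_pos (by omega)]
      have e2 : ρ' (k + 1) = ρ (k + 1) := by simp only [hρ']; rw [if_pos (by omega)]
      have e3 : o' k = o k := by simp only [ho']; rw [if_pos hk]
      rw [e1, e2, e3]
      exact hstep k hk1 (by omega)
    · have e1 : ρ' k = ρ (k + s) := by
        simp only [hρ']
        split
        · have hkk : k = k₁ := by omega
          rw [hkk, heq]; congr 1; omega
        · rfl
      have e2 : ρ' (k + 1) = ρ (k + s + 1) := by
        simp only [hρ']; rw [if_neg (by omega)]; congr 1; omega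
      have e3 : o' k = o (k + s) := by simp only [ho']; rw [if_neg hk]
      rw [e1, e2, e3]
      exact hstep (k + s) (by omega) (by omega)
  · rw [hρend]; exact hpos
  · rw [hρend]; exact hfin

theorem stmt10 {A Q : Type*} [Inhabited A] [Fintype Q] (T : TwoNFT A Q)
    (hf : Functional T) (N : ℕ) (hN : Fintype.card Q = N) :
    ∀ u v, TReal T u v →
      ∃ m ρ o, IsAccRun T u m ρ o ∧ outWord o m = v ∧
        ∀ i, (CS ρ m i).length ≤ N := by
  classical
  intro u v huv
  have hP : ∃ m, ∃ ρ o, IsAccRun T u m ρ o := by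
    obtain ⟨m0, ρ0, o0, hacc0, _⟩ := huv
    exact ⟨m0, ρ0, o0, hacc0⟩
  obtain ⟨ρ, o, hacc⟩ := Nat.find_spec hP
  set m := Nat.find hP with hm
  have hout : outWord o m = v := hf u _ v ⟨m, ρ, o, hacc, rfl⟩ huv
  refine ⟨m, ρ, o, hacc, hout, ?_⟩
  intro i
  by_contra hlen
  push_neg at hlen
  -- the list of time indices visiting position i
  set L : List ℕ := ((List.range m).map (· + 1)).filter (fun k => (ρ k).2 = i) with hL
  have hLnd : L.Nodup := by
    refine List.Nodup.filter _ (List.Nodup.map ?_ List.nodup_range)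
    intro a b hab
    simpa using hab
  have hCS : CS ρ m i = L.map fun k => (ρ k).1 := rfl
  have hnotnd : ¬ (L.map fun k => (ρ k).1).Nodup := by
    intro hnd
    have := hnd.length_le_card
    rw [List.length_map] at this
    have : (CS ρ m i).length ≤ N := by
      rw [hCS, List.length_map]; omega
    omega
  rw [List.nodup_map_iff_inj_on hLnd] at hnotnd
  push_neg at hnotnd
  obtain ⟨x, hx, y, hy, hfxy, hxy⟩ := hnotnd
  have hmem : ∀ z ∈ L, 1 ≤ z ∧ z ≤ m ∧ (ρ z).2 = i := by
    intro z hz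
    rw [hL, List.mem_filter, List.mem_map] at hz
    obtain ⟨⟨a, ha, rfl⟩, hz2⟩ := hz
    rw [List.mem_range] at ha
    refine ⟨by omega, by omega, by simpa using hz2⟩
  obtain ⟨hx1, hxm, hxi⟩ := hmem x hx
  obtain ⟨hy1, hym, hyi⟩ := hmem y hy
  have heqρ : ρ x = ρ y := Prod.ext hfxy (hxi.trans hyi.symm)
  -- wlog x < y
  have key : ∀ a b : ℕ, 1 ≤ a → a < b → b ≤ m → ρ a = ρ b → False := by
    intro a b ha hab hbm he
    obtain ⟨ρ', o', hacc'⟩ := splice_run T u m ρ o hacc a b ha hab hbm he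
    exact Nat.find_min hP (by omega) ⟨ρ', o', hacc'⟩
  rcases lt_or_gt_of_ne hxy with h | h
  · exact key x y hx1 h hym heqρ
  · exact key y x hy1 h hxm heqρ.symm
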